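/- Singular value sufficient condition for NSP: Suppose T ≥ m+n, S ⊆ {0,…,T−1} with |S^c| ≥ m+n, and √|S| · σ_max([X_S; U_S]) < c · σ_min([X_{S^c}; U_{S^c}]). Then for every nonzero matrix M = [A, B] ∈ ℝ^{n×(n+m)}, ‖M [X_S; U_S]‖_{2,col} < c · ‖M [X_{S^c}; U_{S^c}]‖_{2,col}. -/
import Mathlib


/-- Euclidean (`ℓ2`) norm of a finitely indexed real vector. -/
noncomputable def nrm2 {ι : Type*} [Fintype ι] (v : ι → ℝ) : ℝ :=
  Real.sqrt (∑ j, v j ^ 2)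

/-- Largest singular value of the submatrix of `V` formed by the columns in `I`:
`sup` over unit vectors `w` of the Euclidean norm of `(wᵀ V)` restricted to `I`. -/
noncomputable def sMaxOn {ι κ : Type*} [Fintype ι] [Fintype κ]
    (V : Matrix ι κ ℝ) (I : Finset κ) : ℝ :=
  ⨆ w : {w : ι → ℝ // ∑ i, w i ^ 2 = 1},
    Real.sqrt (∑ t ∈ I, (Matrix.vecMul w.1 V t) ^ 2)

/-- Smallest singular value of the submatrix of `V` formed by the columns in `I`. -/
noncomputable def sMinOn {ι κ : Type*} [Fintype ι] [Fintype κ]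
    (V : Matrix ι κ ℝ) (I : Finset κ) : ℝ :=
  ⨅ w : {w : ι → ℝ // ∑ i, w i ^ 2 = 1},
    Real.sqrt (∑ t ∈ I, (Matrix.vecMul w.1 V t) ^ 2)

section Aux
variable {ι κ : Type*} [Fintype ι] [Fintype κ]

lemma sMaxOn_nonneg (V : Matrix ι κ ℝ) (I : Finset κ) : 0 ≤ sMaxOn V I :=
  Real.iSup_nonneg fun _ => Real.sqrt_nonneg _

lemma sMinOn_nonneg (V : Matrix ι κ ℝ) (I : Finset κ) : 0 ≤ sMinOn V I :=
  Real.iInf_nonneg fun _ => Real.sqrt_nonneg _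

lemma bdd_above_aux (V : Matrix ι κ ℝ) (I : Finset κ) :
    BddAbove (Set.range fun w : {w : ι → ℝ // ∑ i, w i ^ 2 = 1} =>
      Real.sqrt (∑ t ∈ I, (Matrix.vecMul w.1 V t) ^ 2)) := by
  refine ⟨Real.sqrt (∑ t ∈ I, ∑ k, V k t ^ 2), ?_⟩
  rintro x ⟨w, rfl⟩
  apply Real.sqrt_le_sqrt
  apply Finset.sum_le_sum
  intro t _
  have h := Finset.sum_mul_sq_le_sq_mul_sq Finset.univ w.1 (fun k => V k t)
  have hv : Matrix.vecMul w.1 V t = ∑ k, w.1 k * V k t := by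
    simp [Matrix.vecMul, dotProduct]
  rw [hv]
  calc (∑ k, w.1 k * V k t) ^ 2 ≤ (∑ k, w.1 k ^ 2) * ∑ k, V k t ^ 2 := h
    _ = ∑ k, V k t ^ 2 := by rw [w.2, one_mul]

lemma key_max (V : Matrix ι κ ℝ) (I : Finset κ) (w : ι → ℝ) :
    ∑ t ∈ I, (Matrix.vecMul w V t) ^ 2 ≤ (∑ k, w k ^ 2) * (sMaxOn V I) ^ 2 := by
  by_cases hw : ∑ k, w k ^ 2 = 0
  · have hw0 : w = 0 := by
      funext k
      have := (Finset.sum_eq_zero_iff_of_nonneg (fun i _ => sq_nonneg (w i))).mp hw k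
        (Finset.mem_univ k)
      simpa [pow_eq_zero_iff] using this
    simp [hw0, hw]
  · have hs : 0 < ∑ k, w k ^ 2 :=
      lt_of_le_of_ne (Finset.sum_nonneg fun i _ => sq_nonneg (w i)) (Ne.symm hw)
    set s := ∑ k, w k ^ 2 with hs_def
    have hss : 0 < Real.sqrt s := Real.sqrt_pos.mpr hs
    set u : ι → ℝ := fun k => w k / Real.sqrt s with hu_def
    have hu1 : ∑ k, u k ^ 2 = 1 := by
      simp only [hu_def, div_pow, Real.sq_sqrt hs.le]
      rw [← Finset.sum_div, ← hs_def, div_self hs.ne']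
    have hwu : ∀ t, Matrix.vecMul w V t = Real.sqrt s * Matrix.vecMul u V t := by
      intro t
      simp only [Matrix.vecMul, dotProduct, hu_def, Finset.mul_sum]
      apply Finset.sum_congr rfl
      intro k _
      field_simp
    have hsum : ∑ t ∈ I, (Matrix.vecMul w V t) ^ 2
        = s * ∑ t ∈ I, (Matrix.vecMul u V t) ^ 2 := by
      rw [Finset.mul_sum]
      apply Finset.sum_congr rfl
      intro t _
      rw [hwu t, mul_pow, Real.sq_sqrt hs.le]
    rw [hsum]
    apply mul_le_mul_of_nonneg_left _ hs.le
    have hle : Real.sqrt (∑ t ∈ I, (Matrix.vecMul u V t) ^ 2) ≤ sMaxOn V I :=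
      le_ciSup (bdd_above_aux V I) (⟨u, hu1⟩ : {w : ι → ℝ // ∑ i, w i ^ 2 = 1})
    have h0 : 0 ≤ ∑ t ∈ I, (Matrix.vecMul u V t) ^ 2 :=
      Finset.sum_nonneg fun t _ => sq_nonneg _
    nlinarith [Real.sq_sqrt h0, Real.sqrt_nonneg (∑ t ∈ I, (Matrix.vecMul u V t) ^ 2)]

lemma key_min (V : Matrix ι κ ℝ) (I : Finset κ) (w : ι → ℝ) :
    (∑ k, w k ^ 2) * (sMinOn V I) ^ 2 ≤ ∑ t ∈ I, (Matrix.vecMul w V t) ^ 2 := by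
  by_cases hw : ∑ k, w k ^ 2 = 0
  · rw [hw, zero_mul]
    exact Finset.sum_nonneg fun t _ => sq_nonneg _
  · have hs : 0 < ∑ k, w k ^ 2 :=
      lt_of_le_of_ne (Finset.sum_nonneg fun i _ => sq_nonneg (w i)) (Ne.symm hw)
    set s := ∑ k, w k ^ 2 with hs_def
    have hss : 0 < Real.sqrt s := Real.sqrt_pos.mpr hs
    set u : ι → ℝ := fun k => w k / Real.sqrt s with hu_def
    have hu1 : ∑ k, u k ^ 2 = 1 := by
      simp only [hu_def, div_pow, Real.sq_sqrt hs.le]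
      rw [← Finset.sum_div, ← hs_def, div_self hs.ne']
    have hwu : ∀ t, Matrix.vecMul w V t = Real.sqrt s * Matrix.vecMul u V t := by
      intro t
      simp only [Matrix.vecMul, dotProduct, hu_def, Finset.mul_sum]
      apply Finset.sum_congr rfl
      intro k _
      field_simp
    have hsum : ∑ t ∈ I, (Matrix.vecMul w V t) ^ 2
        = s * ∑ t ∈ I, (Matrix.vecMul u V t) ^ 2 := by
      rw [Finset.mul_sum]
      apply Finset.sum_congr rfl
      intro t _
      rw [hwu t, mul_pow, Real.sq_sqrt hs.le]
    rw [hsum]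
    apply mul_le_mul_of_nonneg_left _ hs.le
    have hle : sMinOn V I ≤ Real.sqrt (∑ t ∈ I, (Matrix.vecMul u V t) ^ 2) :=
      ciInf_le ⟨0, by rintro x ⟨v, rfl⟩; exact Real.sqrt_nonneg _⟩
        (⟨u, hu1⟩ : {w : ι → ℝ // ∑ i, w i ^ 2 = 1})
    have h0 : 0 ≤ ∑ t ∈ I, (Matrix.vecMul u V t) ^ 2 :=
      Finset.sum_nonneg fun t _ => sq_nonneg _
    nlinarith [Real.sq_sqrt h0, sMinOn_nonneg V I]

lemma sqrt_sum_le {s : Finset κ} {f : κ → ℝ} (hf : ∀ t ∈ s, 0 ≤ f t) :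
    Real.sqrt (∑ t ∈ s, f t) ≤ ∑ t ∈ s, Real.sqrt (f t) := by
  have h1 : ∑ t ∈ s, f t ≤ (∑ t ∈ s, Real.sqrt (f t)) ^ 2 := by
    calc ∑ t ∈ s, f t = ∑ t ∈ s, (Real.sqrt (f t)) ^ 2 :=
          Finset.sum_congr rfl fun t ht => (Real.sq_sqrt (hf t ht)).symm
      _ ≤ (∑ t ∈ s, Real.sqrt (f t)) ^ 2 :=
          Finset.sum_sq_le_sq_sum_of_nonneg fun t _ => Real.sqrt_nonneg _
  calc Real.sqrt (∑ t ∈ s, f t) ≤ Real.sqrt ((∑ t ∈ s, Real.sqrt (f t)) ^ 2) :=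
        Real.sqrt_le_sqrt h1
    _ = ∑ t ∈ s, Real.sqrt (f t) :=
        Real.sqrt_sq (Finset.sum_nonneg fun t _ => Real.sqrt_nonneg _)

end Aux

/-- Singular value sufficient condition for NSP.  If `T ≥ m + n`,
`|Sᶜ| ≥ m + n`, and `√|S| · σ_max([X;U]_S) < c · σ_min([X;U]_{Sᶜ})`, then for every
nonzero `M = [A, B]` one has `‖M [X;U]_S‖_{2,col} < c · ‖M [X;U]_{Sᶜ}‖_{2,col}`.
Here `V : ℝ^{(n+m) × T}` stands for the stacked matrix `[X; U]`. -/
theorem stmt5 {n m T : ℕ} (V : Matrix (Fin (n + m)) (Fin T) ℝ)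
    (S : Finset (Fin T)) (c : ℝ)
    (hT : m + n ≤ T) (hSc : m + n ≤ Sᶜ.card)
    (h : Real.sqrt S.card * sMaxOn V S < c * sMinOn V Sᶜ) :
    ∀ M : Matrix (Fin n) (Fin (n + m)) ℝ, M ≠ 0 →
      ∑ t ∈ S, nrm2 (fun i => (M * V) i t) <
        c * ∑ t ∈ Sᶜ, nrm2 (fun i => (M * V) i t) := by
  intro M hM
  -- Frobenius norm squared of M
  set Mf2 : ℝ := ∑ i, ∑ k, M i k ^ 2 with hMf2_def
  have hMf2_pos : 0 < Mf2 := by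
    obtain ⟨i, k, hik⟩ : ∃ i k, M i k ≠ 0 := by
      by_contra hcon
      push_neg at hcon
      exact hM (by ext i k; simpa using hcon i k)
    apply Finset.sum_pos' (fun i _ => Finset.sum_nonneg fun k _ => sq_nonneg _)
    exact ⟨i, Finset.mem_univ i, Finset.sum_pos'
      (fun k _ => sq_nonneg _) ⟨k, Finset.mem_univ k, by positivity⟩⟩
  -- columns as row-wise vecMul
  have hcol : ∀ t, ∑ i, ((M * V) i t) ^ 2 = ∑ i, (Matrix.vecMul (M i) V t) ^ 2 := by
    intro t
    apply Finset.sum_congr rfl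
    intro i _
    simp [Matrix.mul_apply, Matrix.vecMul, dotProduct]
  set N : Fin T → ℝ := fun t => nrm2 (fun i => (M * V) i t) with hN_def
  have hN_nonneg : ∀ t, 0 ≤ N t := fun t => Real.sqrt_nonneg _
  have hNsq : ∀ t, N t ^ 2 = ∑ i, (Matrix.vecMul (M i) V t) ^ 2 := by
    intro t
    rw [hN_def]
    simp only [nrm2]
    rw [Real.sq_sqrt (Finset.sum_nonneg fun i _ => sq_nonneg _)]
    exact hcol t
  -- Frobenius bound on S
  have hFS : ∀ (I : Finset (Fin T)), ∑ t ∈ I, N t ^ 2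
      = ∑ i, ∑ t ∈ I, (Matrix.vecMul (M i) V t) ^ 2 := by
    intro I
    rw [Finset.sum_comm]
    exact Finset.sum_congr rfl fun t _ => hNsq t
  have hmax : ∑ t ∈ S, N t ^ 2 ≤ Mf2 * (sMaxOn V S) ^ 2 := by
    rw [hFS S, hMf2_def, Finset.sum_mul]
    exact Finset.sum_le_sum fun i _ => key_max V S (M i)
  have hmin : Mf2 * (sMinOn V Sᶜ) ^ 2 ≤ ∑ t ∈ Sᶜ, N t ^ 2 := by
    rw [hFS Sᶜ, hMf2_def, Finset.sum_mul]
    exact Finset.sum_le_sum fun i _ => key_min V Sᶜ (M i)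
  set FM := Real.sqrt Mf2 with hFM_def
  have hFM_pos : 0 < FM := Real.sqrt_pos.mpr hMf2_pos
  have hFM_sq : FM ^ 2 = Mf2 := Real.sq_sqrt hMf2_pos.le
  have hsmax := sMaxOn_nonneg V S
  have hsmin := sMinOn_nonneg V Sᶜ
  have hcardS : (0:ℝ) ≤ Real.sqrt S.card := Real.sqrt_nonneg _
  -- upper bound for LHS
  have hLHS : ∑ t ∈ S, N t ≤ Real.sqrt S.card * sMaxOn V S * FM := by
    have h1 : (∑ t ∈ S, N t) ^ 2 ≤ S.card * ∑ t ∈ S, N t ^ 2 :=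
      sq_sum_le_card_mul_sum_sq
    have h2 : (∑ t ∈ S, N t) ^ 2 ≤ S.card * (Mf2 * (sMaxOn V S) ^ 2) := by
      refine h1.trans ?_
      exact mul_le_mul_of_nonneg_left hmax (Nat.cast_nonneg _)
    have hsq : (Real.sqrt S.card * sMaxOn V S * FM) ^ 2
        = S.card * (Mf2 * (sMaxOn V S) ^ 2) := by
      have : (Real.sqrt S.card) ^ 2 = (S.card : ℝ) :=
        Real.sq_sqrt (Nat.cast_nonneg _)
      rw [mul_pow, mul_pow, this, hFM_sq]
      ring
    have hnn : 0 ≤ ∑ t ∈ S, N t := Finset.sum_nonneg fun t _ => hN_nonneg t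
    nlinarith [mul_nonneg (mul_nonneg hcardS hsmax) hFM_pos.le]
  -- lower bound for RHS
  have hRHS : sMinOn V Sᶜ * FM ≤ ∑ t ∈ Sᶜ, N t := by
    have h1 : Real.sqrt (∑ t ∈ Sᶜ, N t ^ 2) ≤ ∑ t ∈ Sᶜ, N t := by
      have := sqrt_sum_le (s := Sᶜ) (f := fun t => N t ^ 2)
        (fun t _ => sq_nonneg _)
      refine this.trans (le_of_eq ?_)
      exact Finset.sum_congr rfl fun t _ => Real.sqrt_sq (hN_nonneg t)
    have h2 : sMinOn V Sᶜ * FM ≤ Real.sqrt (∑ t ∈ Sᶜ, N t ^ 2) := by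
      have h3 : Real.sqrt (Mf2 * (sMinOn V Sᶜ) ^ 2)
          ≤ Real.sqrt (∑ t ∈ Sᶜ, N t ^ 2) := Real.sqrt_le_sqrt hmin
      have h4 : Real.sqrt (Mf2 * (sMinOn V Sᶜ) ^ 2) = sMinOn V Sᶜ * FM := by
        rw [Real.sqrt_mul hMf2_pos.le, Real.sqrt_sq hsmin, mul_comm]
      rw [← h4]
      exact h3
    exact h2.trans h1
  -- positivity of c
  have hc_pos : 0 < c := by
    by_contra hc
    push_neg at hc
    have : c * sMinOn V Sᶜ ≤ 0 := mul_nonpos_of_nonpos_of_nonneg hc hsmin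
    nlinarith [mul_nonneg hcardS hsmax]
  calc ∑ t ∈ S, N t ≤ Real.sqrt S.card * sMaxOn V S * FM := hLHS
    _ < c * sMinOn V Sᶜ * FM := by
        apply mul_lt_mul_of_pos_right h hFM_pos
    _ = c * (sMinOn V Sᶜ * FM) := by ring
    _ ≤ c * ∑ t ∈ Sᶜ, N t := mul_le_mul_of_nonneg_left hRHS hc_pos.le
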